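/- Let Y be a metric space, (η_n) a sequence of finite Borel measures on Y converging weakly to a finite measure η, and v : Y → [-∞, ∞] an upper semicontinuous function whose positive part v⁺ = max(v, 0) is uniformly integrable with respect to the family {η_n : n ∈ ℕ}, i.e. lim_{l→∞} sup_n ∫_Y v⁺·1{v⁺ ≥ l} dη_n = 0. Then ∫_Y v dη ≥ limsup_{n→∞} ∫_Y v dη_n. -/

import Mathlib

open MeasureTheory Filter Set
open scoped ENNReal NNReal Topology

/-- The positive part of an extended real number, as an extended nonnegative real. -/
noncomputable def EReal.posPart' (x : EReal) : ENNReal :=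
  if x = ⊤ then ⊤ else ENNReal.ofReal x.toReal

/-- The (possibly infinite) integral of an extended-real-valued function,
defined via positive and negative parts. -/
noncomputable def erealIntegral {Y : Type*} [MeasurableSpace Y]
    (η : Measure Y) (v : Y → EReal) : EReal :=
  ((∫⁻ y, (v y).posPart' ∂η : ENNReal) : EReal) -
    ((∫⁻ y, (-(v y)).posPart' ∂η : ENNReal) : EReal)

@[simp] lemma posPart'_top : (⊤ : EReal).posPart' = ⊤ := by simp [EReal.posPart']

@[simp] lemma posPart'_bot : (⊥ : EReal).posPart' = 0 := by
  simp [EReal.posPart']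

@[simp] lemma posPart'_coe (r : ℝ) : ((r : EReal)).posPart' = ENNReal.ofReal r := by
  simp [EReal.posPart']

lemma posPart'_mono : Monotone EReal.posPart' := by
  intro x y hxy
  rcases eq_or_ne y ⊤ with rfl | hy
  · simp
  · have hx : x ≠ ⊤ := fun h => hy (top_le_iff.mp (h ▸ hxy))
    simp only [EReal.posPart', if_neg hx, if_neg hy]
    rcases eq_or_ne x ⊥ with rfl | hx'
    · simp
    · exact ENNReal.ofReal_le_ofReal (EReal.toReal_le_toReal hxy hx' hy)

lemma posPart'_measurable : Measurable EReal.posPart' := posPart'_mono.measurable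

lemma key_pointwise (x : EReal) (l k : ℝ) (hl : 0 ≤ l) (hk : 0 ≤ k) :
    ENNReal.ofReal (((x ⊓ (l : EReal)) ⊔ ((-k : ℝ) : EReal)).toReal + k)
      + min ((-x).posPart') (ENNReal.ofReal k)
    = min x.posPart' (ENNReal.ofReal l) + ENNReal.ofReal k := by
  have hofmin : ∀ a b : ℝ, ENNReal.ofReal (min a b) = min (ENNReal.ofReal a) (ENNReal.ofReal b) :=
    fun a b => Monotone.map_min (fun _ _ h => ENNReal.ofReal_le_ofReal h)
  induction x with
  | bot =>
    have h1 : (⊥ ⊔ ((-k : ℝ) : EReal)) = ((-k : ℝ) : EReal) := bot_sup_eq _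
    simp [h1, hk, min_eq_right, ENNReal.ofReal_le_ofReal, le_top]
  | top =>
    have h1 : ((⊤ : EReal) ⊓ (l : EReal)) = (l : EReal) := top_inf_eq _
    have h2 : ((l : EReal) ⊔ ((-k : ℝ) : EReal)) = (l : EReal) := by
      rw [sup_eq_left]
      exact_mod_cast (neg_nonpos.mpr hk).trans hl
    have h3 : min (⊤ : ENNReal) (ENNReal.ofReal l) = ENNReal.ofReal l := min_eq_right le_top
    rw [h1, h2, EReal.posPart'] 
    simp [h3, ENNReal.ofReal_add hl hk]
  | coe r =>
    have hmin : ((r : EReal) ⊓ (l : EReal)) = ((min r l : ℝ) : EReal) := by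
      exact (Monotone.map_min (fun _ _ h => EReal.coe_le_coe_iff.mpr h)).symm
    have hmax : (((min r l : ℝ) : EReal) ⊔ ((-k : ℝ) : EReal)) = ((max (min r l) (-k) : ℝ) : EReal) := by
      exact (Monotone.map_max (fun _ _ h => EReal.coe_le_coe_iff.mpr h)).symm
    rw [hmin, hmax, ← EReal.coe_neg, posPart'_coe, posPart'_coe, EReal.toReal_coe,
      ← hofmin, ← hofmin]
    rcases le_total 0 r with hr | hr
    · have h1 : min (-r) k ≤ 0 := (min_le_left _ _).trans (neg_nonpos.mpr hr)
      have h2 : max (min r l) (-k) = min r l :=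
        max_eq_left ((neg_nonpos.mpr hk).trans (le_min hr hl))
      rw [h2, ENNReal.ofReal_eq_zero.mpr h1, add_zero,
        ← ENNReal.ofReal_add (le_min hr hl) hk]
    · rcases le_total (-k) r with hrk | hrk
      · have h2 : max (min r l) (-k) = r := by
          rw [min_eq_left (hr.trans hl)]; exact max_eq_left hrk
        have h3 : min (-r) k = -r := min_eq_left (by linarith)
        have h4 : min r l ≤ 0 := (min_le_left _ _).trans hr
        rw [h2, h3, ENNReal.ofReal_eq_zero.mpr h4, zero_add,
          ← ENNReal.ofReal_add (by linarith) (by linarith : (0:ℝ) ≤ -r)]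
        ring_nf
      · have h2 : max (min r l) (-k) = -k := by
          rw [min_eq_left (hr.trans hl)]; exact max_eq_right hrk
        have h3 : min (-r) k = k := min_eq_right (by linarith)
        have h4 : min r l ≤ 0 := (min_le_left _ _).trans hr
        rw [h2, h3, ENNReal.ofReal_eq_zero.mpr h4, zero_add, neg_add_cancel,
          ENNReal.ofReal_zero, zero_add]

section clamp
variable {Y : Type*} [TopologicalSpace Y]

lemma clamp_ne_top (v : Y → EReal) (l k : ℝ) (y : Y) :
    (v y ⊓ (l : EReal)) ⊔ ((-k : ℝ) : EReal) ≠ ⊤ := by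
  apply ne_top_of_le_ne_top (EReal.coe_ne_top (max l (-k)))
  calc (v y ⊓ (l : EReal)) ⊔ ((-k : ℝ) : EReal)
      ≤ (l : EReal) ⊔ ((-k : ℝ) : EReal) := sup_le_sup_right inf_le_right _
    _ = ((max l (-k) : ℝ) : EReal) :=
        (Monotone.map_max (fun _ _ h => EReal.coe_le_coe_iff.mpr h)).symm

lemma clamp_ne_bot (v : Y → EReal) (l k : ℝ) (y : Y) :
    (v y ⊓ (l : EReal)) ⊔ ((-k : ℝ) : EReal) ≠ ⊥ :=
  fun h => EReal.coe_ne_bot (-k) (eq_bot_iff.mpr (h ▸ le_sup_right))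

lemma clamp_nonneg (v : Y → EReal) (l k : ℝ) (hk : 0 ≤ k) (y : Y) :
    0 ≤ ((v y ⊓ (l : EReal)) ⊔ ((-k : ℝ) : EReal)).toReal + k := by
  have h1 : ((-k : ℝ) : EReal) ≤ (v y ⊓ (l : EReal)) ⊔ ((-k : ℝ) : EReal) := le_sup_right
  have := EReal.toReal_le_toReal h1 (EReal.coe_ne_bot _) (clamp_ne_top v l k y)
  rw [EReal.toReal_coe] at this
  linarith

lemma clamp_le (v : Y → EReal) (l k : ℝ) (hl : 0 ≤ l) (hk : 0 ≤ k) (y : Y) :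
    ((v y ⊓ (l : EReal)) ⊔ ((-k : ℝ) : EReal)).toReal + k ≤ l + k := by
  have h1 : (v y ⊓ (l : EReal)) ⊔ ((-k : ℝ) : EReal) ≤ ((l : ℝ) : EReal) := by
    apply sup_le (inf_le_right) _
    exact_mod_cast (neg_nonpos.mpr hk).trans hl
  have := EReal.toReal_le_toReal h1 (clamp_ne_bot v l k y) (EReal.coe_ne_top _)
  rw [EReal.toReal_coe] at this
  linarith

lemma clamp_usc (v : Y → EReal) (husc : UpperSemicontinuous v) (l k : ℝ) :
    UpperSemicontinuous (fun y => ((v y ⊓ (l : EReal)) ⊔ ((-k : ℝ) : EReal)).toReal + k) := by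
  rw [upperSemicontinuous_iff_isOpen_preimage]
  intro c
  set d : EReal := ((c - k : ℝ) : EReal) with hd
  have hiff : ∀ y : Y, (((v y ⊓ (l : EReal)) ⊔ ((-k : ℝ) : EReal)).toReal + k < c) ↔
      ((v y < d ∨ (l : EReal) < d) ∧ ((-k : ℝ) : EReal) < d) := by
    intro y
    rw [← inf_lt_iff, ← sup_lt_iff]
    constructor
    · intro h
      rw [← EReal.coe_toReal (clamp_ne_top v l k y) (clamp_ne_bot v l k y), hd]
      exact_mod_cast (by linarith : ((v y ⊓ (l : EReal)) ⊔ ((-k : ℝ) : EReal)).toReal < c - k)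
    · intro h
      rw [← EReal.coe_toReal (clamp_ne_top v l k y) (clamp_ne_bot v l k y), hd] at h
      have := EReal.coe_lt_coe_iff.mp h
      linarith
  by_cases hkd : ((-k : ℝ) : EReal) < d
  · by_cases hld : (l : EReal) < d
    · have : (fun y => ((v y ⊓ (l : EReal)) ⊔ ((-k : ℝ) : EReal)).toReal + k) ⁻¹' Iio c = univ := by
        ext y; simp only [mem_preimage, mem_Iio, mem_univ, iff_true, hiff y]
        exact ⟨Or.inr hld, hkd⟩
      rw [this]; exact isOpen_univ
    · have : (fun y => ((v y ⊓ (l : EReal)) ⊔ ((-k : ℝ) : EReal)).toReal + k) ⁻¹' Iio c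
          = v ⁻¹' Iio d := by
        ext y
        simp only [mem_preimage, mem_Iio, hiff y]
        constructor
        · rintro ⟨h | h, _⟩
          · exact h
          · exact absurd h hld
        · intro h; exact ⟨Or.inl h, hkd⟩
      rw [this]; exact husc.isOpen_preimage d
  · have : (fun y => ((v y ⊓ (l : EReal)) ⊔ ((-k : ℝ) : EReal)).toReal + k) ⁻¹' Iio c = ∅ := by
      ext y; simp only [mem_preimage, mem_Iio, mem_empty_iff_false, iff_false, hiff y]
      tauto
    rw [this]; exact isOpen_empty
end clamp

lemma core_limsup_lintegral {Y : Type*} [MetricSpace Y] [MeasurableSpace Y] [BorelSpace Y]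
    (η : ℕ → Measure Y) (ηlim : Measure Y)
    (hclosed : ∀ F : Set Y, IsClosed F → limsup (fun n => η n F) atTop ≤ ηlim F)
    (C : ℝ≥0∞) (hC : C ≠ ⊤) (hCb : ∀ n, η n Set.univ ≤ C)
    (u : Y → ℝ) (husc : UpperSemicontinuous u) (h0 : ∀ y, 0 ≤ u y) (c : ℝ) (hc : ∀ y, u y ≤ c) :
    limsup (fun n => ∫⁻ y, ENNReal.ofReal (u y) ∂η n) atTop
      ≤ ∫⁻ y, ENNReal.ofReal (u y) ∂ηlim := by
  have humeas : Measurable u := husc.measurable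
  have hrw : ∀ μ : Measure Y, ∫⁻ y, ENNReal.ofReal (u y) ∂μ
      = ∫⁻ t in Ioi (0:ℝ), μ {a | t ≤ u a} := fun μ =>
    lintegral_eq_lintegral_meas_le μ (Eventually.of_forall h0) humeas.aemeasurable
  simp_rw [hrw]
  have hmeas : ∀ n, Measurable (fun t : ℝ => η n {a | t ≤ u a}) := by
    intro n
    exact Antitone.measurable (fun s t hst => measure_mono (fun a ha => hst.trans ha))
  have hbound : ∀ n, (fun t : ℝ => η n {a | t ≤ u a})
      ≤ᵐ[volume.restrict (Ioi 0)] (Ioc (0:ℝ) c).indicator (fun _ => C) := by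
    intro n
    apply ae_restrict_of_forall_mem measurableSet_Ioi
    intro t ht
    by_cases htc : t ≤ c
    · rw [indicator_of_mem (show t ∈ Ioc (0:ℝ) c from ⟨ht, htc⟩)]
      exact (measure_mono (subset_univ _)).trans (hCb n)
    · rw [indicator_of_notMem (fun h => htc h.2)]
      have : {a | t ≤ u a} = ∅ := by
        ext a; simp only [mem_setOf_eq, mem_empty_iff_false, iff_false, not_le]
        exact lt_of_le_of_lt (hc a) (lt_of_not_ge htc)
      simp [this]
  have hfin : ∫⁻ t in Ioi (0:ℝ), (Ioc (0:ℝ) c).indicator (fun _ => C) t ≠ ⊤ := by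
    have h1 : ∫⁻ t in Ioi (0:ℝ), (Ioc (0:ℝ) c).indicator (fun _ => C) t
        ≤ ∫⁻ t, (Ioc (0:ℝ) c).indicator (fun _ => C) t := lintegral_mono' Measure.restrict_le_self le_rfl
    have h2 : ∫⁻ t, (Ioc (0:ℝ) c).indicator (fun _ => C) t = C * volume (Ioc (0:ℝ) c) := by
      rw [lintegral_indicator measurableSet_Ioc, setLIntegral_const]
    rw [h2] at h1
    exact ne_top_of_le_ne_top (ENNReal.mul_ne_top hC (by simp [Real.volume_Ioc])) h1
  refine (limsup_lintegral_le _ hmeas hbound hfin).trans (lintegral_mono fun t => ?_)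
  apply hclosed
  have hopen : IsOpen (u ⁻¹' Iio t) := husc.isOpen_preimage t
  have : {a | t ≤ u a} = (u ⁻¹' Iio t)ᶜ := by
    ext a; simp [not_lt]
  rw [this]
  exact hopen.isClosed_compl

lemma coe_ennreal_eq_real (x : ℝ≥0∞) (hx : x ≠ ⊤) : (x : EReal) = ((x.toReal : ℝ) : EReal) := by
  conv_lhs => rw [← ENNReal.ofReal_toReal hx]
  rw [EReal.coe_ennreal_ofReal]
  exact_mod_cast congrArg Real.toEReal (max_eq_left (ENNReal.toReal_nonneg (a := x)))

lemma ereal_sub_eq_sub (a b w d : ℝ≥0∞) (ha : a ≠ ⊤) (hb : b ≠ ⊤) (hw : w ≠ ⊤) (hd : d ≠ ⊤)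
    (h : a + d = w + b) : (a : EReal) - (b : EReal) = (w : EReal) - (d : EReal) := by
  rw [coe_ennreal_eq_real a ha, coe_ennreal_eq_real b hb, coe_ennreal_eq_real w hw,
    coe_ennreal_eq_real d hd, ← EReal.coe_sub, ← EReal.coe_sub]
  have h' : a.toReal + d.toReal = w.toReal + b.toReal := by
    rw [← ENNReal.toReal_add ha hd, ← ENNReal.toReal_add hw hb, h]
  norm_cast
  linarith

lemma ereal_add_sub_le (x s b : ℝ≥0∞) (hx : x ≠ ⊤) (hs : s ≠ ⊤) :
    ((x + s : ℝ≥0∞) : EReal) - (b : EReal) ≤ ((x : EReal) - (b : EReal)) + (s : EReal) := by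
  rcases eq_or_ne b ⊤ with rfl | hb
  · rw [EReal.coe_ennreal_top, EReal.sub_top]
    exact bot_le
  · rw [coe_ennreal_eq_real x hx, coe_ennreal_eq_real s hs, coe_ennreal_eq_real b hb,
      coe_ennreal_eq_real (x + s) (by finiteness), ENNReal.toReal_add hx hs,
      ← EReal.coe_sub, ← EReal.coe_sub, ← EReal.coe_add]
    exact_mod_cast le_of_eq (by ring)

lemma ereal_limsup_coe_ennreal (W : ℕ → ℝ≥0∞) :
    limsup (fun n => ((W n : ℝ≥0∞) : EReal)) atTop = ((limsup W atTop : ℝ≥0∞) : EReal) := by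
  have hmono : Monotone ((↑) : ℝ≥0∞ → EReal) := fun _ _ h => EReal.coe_ennreal_le_coe_ennreal_iff.mpr h
  exact (hmono.map_limsup_of_continuousAt W continuous_coe_ennreal_ereal.continuousAt).symm

lemma ennreal_iSup_min_natCast (a : ℝ≥0∞) : ⨆ k : ℕ, min a (k : ℝ≥0∞) = a := by
  apply le_antisymm (iSup_le fun k => min_le_left _ _)
  rcases eq_or_ne a ⊤ with rfl | ha
  · calc (⊤ : ℝ≥0∞) = ⨆ k : ℕ, (k : ℝ≥0∞) := ENNReal.iSup_natCast.symm
      _ ≤ ⨆ k : ℕ, min ⊤ (k : ℝ≥0∞) := by simp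
  · obtain ⟨k, hk⟩ := ENNReal.exists_nat_gt ha
    calc a = min a (k : ℝ≥0∞) := (min_eq_left hk.le).symm
      _ ≤ ⨆ k : ℕ, min a (k : ℝ≥0∞) := le_iSup (fun k : ℕ => min a (k : ℝ≥0∞)) k

theorem stmt_7 {Y : Type*} [MetricSpace Y] [MeasurableSpace Y] [BorelSpace Y]
    (η : ℕ → Measure Y) (ηlim : Measure Y)
    [∀ n, IsFiniteMeasure (η n)] [IsFiniteMeasure ηlim]
    (hweak : ∀ f : Y → ℝ, Continuous f → (∃ M, ∀ y, |f y| ≤ M) →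
      Tendsto (fun n => ∫ y, f y ∂η n) atTop (nhds (∫ y, f y ∂ηlim)))
    (v : Y → EReal) (husc : UpperSemicontinuous v)
    (hui : Tendsto
      (fun l : ℕ => ⨆ n, ∫⁻ y in {y | (l : ENNReal) ≤ (v y).posPart'},
        (v y).posPart' ∂η n) atTop (nhds 0)) :
    limsup (fun n => erealIntegral (η n) v) atTop ≤ erealIntegral ηlim v := by
  classical
  set p : Y → ℝ≥0∞ := fun y => (v y).posPart' with hp_def
  set m : Y → ℝ≥0∞ := fun y => (-(v y)).posPart' with hm_def
  have hvmeas : Measurable v := husc.measurable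
  have hpmeas : Measurable p := posPart'_measurable.comp hvmeas
  have hmmeas : Measurable m :=
    posPart'_measurable.comp (continuous_neg.measurable.comp hvmeas)
  -- portmanteau for closed sets
  have hclosed : ∀ F : Set Y, IsClosed F → limsup (fun n => η n F) atTop ≤ ηlim F := by
    set μs : ℕ → FiniteMeasure Y := fun n => ⟨η n, inferInstance⟩ with hμs
    have htends : Tendsto μs atTop (𝓝 (⟨ηlim, inferInstance⟩ : FiniteMeasure Y)) := by
      refine FiniteMeasure.tendsto_iff_forall_integral_tendsto.mpr ?_
      intro f
      exact hweak f f.continuous ⟨‖f‖, fun y => by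
        simpa [Real.norm_eq_abs] using f.norm_coe_le_norm y⟩
    intro F hF
    exact FiniteMeasure.limsup_measure_closed_le_of_tendsto htends hF
  -- mass convergence and bound
  have hmass : Tendsto (fun n => (η n Set.univ).toReal) atTop (𝓝 ((ηlim Set.univ).toReal)) := by
    have := hweak (fun _ => (1:ℝ)) continuous_const ⟨1, fun y => by norm_num⟩
    simpa [integral_const, smul_eq_mul, measureReal_def] using this
  obtain ⟨C, hC, hCb⟩ : ∃ C : ℝ≥0∞, C ≠ ⊤ ∧ ∀ n, η n Set.univ ≤ C := by
    obtain ⟨R, hR⟩ := hmass.bddAbove_range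
    refine ⟨ENNReal.ofReal R, ENNReal.ofReal_ne_top, fun n => ?_⟩
    rw [← ENNReal.ofReal_toReal (measure_ne_top (η n) _)]
    exact ENNReal.ofReal_le_ofReal (hR ⟨n, rfl⟩)
  -- abbreviations
  set Pl : ℕ → ℕ → ℝ≥0∞ := fun l n => ∫⁻ y, min (p y) (l:ℝ≥0∞) ∂η n with hPl_def
  set Mk : ℕ → ℕ → ℝ≥0∞ := fun k n => ∫⁻ y, min (m y) (k:ℝ≥0∞) ∂η n with hMk_def
  set Pl' : ℕ → ℝ≥0∞ := fun l => ∫⁻ y, min (p y) (l:ℝ≥0∞) ∂ηlim with hPl'_def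
  set Mk' : ℕ → ℝ≥0∞ := fun k => ∫⁻ y, min (m y) (k:ℝ≥0∞) ∂ηlim with hMk'_def
  set PP : ℕ → ℝ≥0∞ := fun n => ∫⁻ y, p y ∂η n with hPP_def
  set MM : ℕ → ℝ≥0∞ := fun n => ∫⁻ y, m y ∂η n with hMM_def
  set M'' : ℝ≥0∞ := ∫⁻ y, m y ∂ηlim with hM''_def
  set P'' : ℝ≥0∞ := ∫⁻ y, p y ∂ηlim with hP''_def
  have htrunc_ne : ∀ (c : ℕ) (μ : Measure Y) [IsFiniteMeasure μ] (g : Y → ℝ≥0∞),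
      (∫⁻ y, min (g y) (c:ℝ≥0∞) ∂μ) ≠ ⊤ := by
    intro c μ _ g
    have h1 : (∫⁻ y, min (g y) (c:ℝ≥0∞) ∂μ) ≤ (c:ℝ≥0∞) * μ Set.univ := by
      calc (∫⁻ y, min (g y) (c:ℝ≥0∞) ∂μ) ≤ ∫⁻ _, (c:ℝ≥0∞) ∂μ :=
            lintegral_mono fun y => min_le_right _ _
        _ = (c:ℝ≥0∞) * μ Set.univ := lintegral_const _
    exact ne_top_of_le_ne_top (ENNReal.mul_ne_top (by simp) (measure_ne_top μ _)) h1
  have hPl_ne : ∀ l n, Pl l n ≠ ⊤ := fun l n => htrunc_ne l (η n) p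
  have hMk_ne : ∀ k n, Mk k n ≠ ⊤ := fun k n => htrunc_ne k (η n) m
  have hPl'_ne : ∀ l, Pl' l ≠ ⊤ := fun l => htrunc_ne l ηlim p
  have hMk'_ne : ∀ k, Mk' k ≠ ⊤ := fun k => htrunc_ne k ηlim m
  -- the integral identity
  have hid : ∀ (l k : ℕ) (μ : Measure Y),
      (∫⁻ y, ENNReal.ofReal (((v y ⊓ ((l:ℝ) : EReal)) ⊔ ((-(k:ℝ) : ℝ) : EReal)).toReal + (k:ℝ)) ∂μ)
        + (∫⁻ y, min (m y) (k:ℝ≥0∞) ∂μ)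
      = (∫⁻ y, min (p y) (l:ℝ≥0∞) ∂μ) + (k:ℝ≥0∞) * μ Set.univ := by
    intro l k μ
    have humeas : Measurable fun y =>
        ENNReal.ofReal (((v y ⊓ ((l:ℝ) : EReal)) ⊔ ((-(k:ℝ) : ℝ) : EReal)).toReal + (k:ℝ)) :=
      ENNReal.measurable_ofReal.comp (clamp_usc v husc (l:ℝ) (k:ℝ)).measurable
    calc (∫⁻ y, ENNReal.ofReal (((v y ⊓ ((l:ℝ) : EReal)) ⊔ ((-(k:ℝ) : ℝ) : EReal)).toReal + (k:ℝ)) ∂μ)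
          + (∫⁻ y, min (m y) (k:ℝ≥0∞) ∂μ)
        = ∫⁻ y, (ENNReal.ofReal (((v y ⊓ ((l:ℝ) : EReal)) ⊔ ((-(k:ℝ) : ℝ) : EReal)).toReal + (k:ℝ))
            + min (m y) (k:ℝ≥0∞)) ∂μ :=
          (lintegral_add_left humeas _).symm
      _ = ∫⁻ y, (min (p y) (l:ℝ≥0∞) + (k:ℝ≥0∞)) ∂μ := by
          refine lintegral_congr fun y => ?_
          have := key_pointwise (v y) (l:ℝ) (k:ℝ) (Nat.cast_nonneg l) (Nat.cast_nonneg k)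
          simpa [ENNReal.ofReal_natCast] using this
      _ = (∫⁻ y, min (p y) (l:ℝ≥0∞) ∂μ) + (k:ℝ≥0∞) * μ Set.univ := by
          rw [lintegral_add_right _ measurable_const, lintegral_const]
  -- core estimate
  have hcore : ∀ l k : ℕ, limsup (fun n => ((Pl l n : EReal) - (Mk k n : EReal))) atTop
      ≤ (Pl' l : EReal) - (Mk' k : EReal) := by
    intro l k
    set u : Y → ℝ := fun y => ((v y ⊓ ((l:ℝ) : EReal)) ⊔ ((-(k:ℝ) : ℝ) : EReal)).toReal + (k:ℝ)
      with hu_def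
    have hu_usc := clamp_usc v husc (l:ℝ) (k:ℝ)
    have hu0 : ∀ y, 0 ≤ u y := clamp_nonneg v _ _ (Nat.cast_nonneg k)
    have huc : ∀ y, u y ≤ (l:ℝ) + (k:ℝ) := clamp_le v _ _ (Nat.cast_nonneg l) (Nat.cast_nonneg k)
    set W : ℕ → ℝ≥0∞ := fun n => ∫⁻ y, ENNReal.ofReal (u y) ∂η n with hW_def
    set W' : ℝ≥0∞ := ∫⁻ y, ENNReal.ofReal (u y) ∂ηlim with hW'_def
    have hW_ne : ∀ n, W n ≠ ⊤ := by
      intro n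
      have h1 : W n ≤ ENNReal.ofReal ((l:ℝ) + (k:ℝ)) * η n Set.univ := by
        calc W n ≤ ∫⁻ _, ENNReal.ofReal ((l:ℝ) + (k:ℝ)) ∂η n :=
              lintegral_mono fun y => ENNReal.ofReal_le_ofReal (huc y)
          _ = _ := lintegral_const _
      exact ne_top_of_le_ne_top
        (ENNReal.mul_ne_top ENNReal.ofReal_ne_top (measure_ne_top _ _)) h1
    have hW'_ub : limsup W atTop ≤ W' :=
      core_limsup_lintegral η ηlim hclosed C hC hCb u hu_usc hu0 _ huc
    set c : ℕ → ℝ≥0∞ := fun n => (k:ℝ≥0∞) * η n Set.univ with hc_def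
    set c' : ℝ≥0∞ := (k:ℝ≥0∞) * ηlim Set.univ with hc'_def
    have hc_ne : ∀ n, c n ≠ ⊤ := fun n => ENNReal.mul_ne_top (by simp) (measure_ne_top _ _)
    have hc'_ne : c' ≠ ⊤ := ENNReal.mul_ne_top (by simp) (measure_ne_top _ _)
    have hWn : ∀ n, (Pl l n : EReal) - (Mk k n : EReal) = (W n : EReal) - (c n : EReal) :=
      fun n => ereal_sub_eq_sub _ _ _ _ (hPl_ne l n) (hMk_ne k n) (hW_ne n) (hc_ne n)
        (hid l k (η n)).symm
    have hW'id : (Pl' l : EReal) - (Mk' k : EReal) = (W' : EReal) - (c' : EReal) :=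
      ereal_sub_eq_sub _ _ _ _ (hPl'_ne l) (hMk'_ne k) (by
        intro h
        exact hW_ne 0 (by
          -- W' finite similarly; reuse bound
          exact absurd h (by
            have h1 : W' ≤ ENNReal.ofReal ((l:ℝ) + (k:ℝ)) * ηlim Set.univ := by
              calc W' ≤ ∫⁻ _, ENNReal.ofReal ((l:ℝ) + (k:ℝ)) ∂ηlim :=
                    lintegral_mono fun y => ENNReal.ofReal_le_ofReal (huc y)
                _ = _ := lintegral_const _
            exact ne_top_of_le_ne_top
              (ENNReal.mul_ne_top ENNReal.ofReal_ne_top (measure_ne_top _ _)) h1))) hc'_ne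
        (hid l k ηlim).symm
    -- tendsto of the mass term in EReal
    have hcoe : ∀ n, ((c n : ℝ≥0∞) : EReal) = (((k:ℝ) * (η n Set.univ).toReal : ℝ) : EReal) := by
      intro n
      rw [coe_ennreal_eq_real _ (hc_ne n), hc_def, ENNReal.toReal_mul, ENNReal.toReal_natCast]
    have hcoe' : ((c' : ℝ≥0∞) : EReal) = (((k:ℝ) * (ηlim Set.univ).toReal : ℝ) : EReal) := by
      rw [coe_ennreal_eq_real _ hc'_ne, hc'_def, ENNReal.toReal_mul, ENNReal.toReal_natCast]
    have htendc : Tendsto (fun n => ((c n : ℝ≥0∞) : EReal)) atTop (𝓝 ((c' : ℝ≥0∞) : EReal)) := by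
      simp only [hcoe, hcoe']
      exact (continuous_coe_real_ereal.tendsto _).comp (hmass.const_mul (k:ℝ))
    have hliminfc : liminf (fun n => ((c n : ℝ≥0∞) : EReal)) atTop = ((c' : ℝ≥0∞) : EReal) :=
      htendc.liminf_eq
    have hlimneg : limsup (fun n => -((c n : ℝ≥0∞) : EReal)) atTop = -((c' : ℝ≥0∞) : EReal) := by
      rw [show (fun n => -((c n : ℝ≥0∞) : EReal)) = -(fun n => ((c n : ℝ≥0∞) : EReal)) from rfl,
        EReal.limsup_neg, hliminfc]
    have hlimW : limsup (fun n => ((W n : ℝ≥0∞) : EReal)) atTop = ((limsup W atTop : ℝ≥0∞) : EReal) :=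
      ereal_limsup_coe_ennreal W
    calc limsup (fun n => ((Pl l n : EReal) - (Mk k n : EReal))) atTop
        = limsup (fun n => ((W n : EReal) + (-(c n : EReal)))) atTop := by
          apply limsup_congr
          exact Eventually.of_forall fun n => hWn n
      _ ≤ limsup (fun n => ((W n : ℝ≥0∞) : EReal)) atTop
            + limsup (fun n => -((c n : ℝ≥0∞) : EReal)) atTop := by
          apply EReal.limsup_add_le
          · left; rw [hlimW]; exact EReal.coe_ennreal_ne_bot _
          · right; rw [hlimneg, hcoe', ← EReal.coe_neg]; exact EReal.coe_ne_bot _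
      _ = ((limsup W atTop : ℝ≥0∞) : EReal) + (-(c' : EReal)) := by rw [hlimW, hlimneg]
      _ ≤ (W' : EReal) + (-(c' : EReal)) := by
          apply add_le_add_left
          exact EReal.coe_ennreal_le_coe_ennreal_iff.mpr hW'_ub
      _ = (W' : EReal) - (c' : EReal) := rfl
      _ = (Pl' l : EReal) - (Mk' k : EReal) := hW'id.symm
  -- step 3 : remove the truncation of the negative part
  have hstep3 : ∀ l : ℕ, limsup (fun n => (Pl l n : EReal) - (MM n : EReal)) atTop
      ≤ (Pl' l : EReal) - (M'' : EReal) := by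
    intro l
    have hk_mono : Monotone Mk' := by
      intro k₁ k₂ hk
      exact lintegral_mono fun y => min_le_min le_rfl (by exact_mod_cast Nat.cast_le.mpr hk)
    have hMk'_sup : ⨆ k, Mk' k = M'' := by
      rw [hMk'_def, hM''_def, ← lintegral_iSup (fun k => hmmeas.min measurable_const)
        (fun k₁ k₂ hk y => min_le_min le_rfl (by exact_mod_cast Nat.cast_le.mpr hk))]
      exact lintegral_congr fun y => ennreal_iSup_min_natCast (m y)
    have htendMk' : Tendsto Mk' atTop (𝓝 M'') := hMk'_sup ▸ tendsto_atTop_iSup hk_mono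
    have htend2 : Tendsto (fun k => (Pl' l : EReal) - (Mk' k : EReal)) atTop
        (𝓝 ((Pl' l : EReal) - (M'' : EReal))) := by
      have h1 : Tendsto (fun k => ((Mk' k : ℝ≥0∞) : EReal)) atTop (𝓝 ((M'' : ℝ≥0∞) : EReal)) :=
        (continuous_coe_ennreal_ereal.tendsto _).comp htendMk'
      have h2 : Tendsto (fun k => -((Mk' k : ℝ≥0∞) : EReal)) atTop (𝓝 (-(M'' : EReal))) := h1.neg
      have hcont : ContinuousAt (fun q : EReal × EReal => q.1 + q.2)
          ((Pl' l : EReal), -(M'' : EReal)) := by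
        apply EReal.continuousAt_add
        · left
          simp [EReal.coe_ennreal_eq_top_iff, hPl'_ne l]
        · left; exact EReal.coe_ennreal_ne_bot _
      exact hcont.tendsto.comp (tendsto_const_nhds.prodMk_nhds h2)
    refine ge_of_tendsto htend2 (Eventually.of_forall fun k => ?_)
    calc limsup (fun n => (Pl l n : EReal) - (MM n : EReal)) atTop
        ≤ limsup (fun n => (Pl l n : EReal) - (Mk k n : EReal)) atTop := by
          apply limsup_le_limsup (Eventually.of_forall fun n => ?_)
          exact EReal.sub_le_sub le_rfl (EReal.coe_ennreal_le_coe_ennreal_iff.mpr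
            (lintegral_mono fun y => min_le_left _ _))
      _ ≤ _ := hcore l k
  -- uniform integrability bound
  set S : ℕ → ℝ≥0∞ := fun l => ⨆ n, ∫⁻ y in {y | (l:ℝ≥0∞) ≤ p y}, p y ∂η n with hS_def
  have hPlS : ∀ l n, PP n ≤ Pl l n + S l := by
    intro l n
    have hAmeas : MeasurableSet {y | (l:ℝ≥0∞) ≤ p y} := hpmeas measurableSet_Ici
    calc PP n ≤ ∫⁻ y, (min (p y) (l:ℝ≥0∞) + Set.indicator {y | (l:ℝ≥0∞) ≤ p y} p y) ∂η n := by
          apply lintegral_mono fun y => ?_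
          by_cases h : (l:ℝ≥0∞) ≤ p y
          · rw [Set.indicator_of_mem (show y ∈ {y | (l:ℝ≥0∞) ≤ p y} from h) p]
            exact self_le_add_left _ _
          · rw [Set.indicator_of_notMem (show y ∉ {y | (l:ℝ≥0∞) ≤ p y} from h) p, add_zero,
              min_eq_left (le_of_not_ge h)]
      _ = Pl l n + ∫⁻ y in {y | (l:ℝ≥0∞) ≤ p y}, p y ∂η n := by
          rw [lintegral_add_right _ (hpmeas.indicator hAmeas), lintegral_indicator hAmeas]
      _ ≤ Pl l n + S l := by
          rw [hS_def]
          exact add_le_add_right (le_iSup (fun n => ∫⁻ y in {y | (l:ℝ≥0∞) ≤ p y}, p y ∂η n) n) _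
  have hS_small : ∀ᶠ l : ℕ in atTop, S l < 1 := hui.eventually_lt_const (by norm_num)
  have hfinal : ∀ᶠ l : ℕ in atTop, limsup (fun n => erealIntegral (η n) v) atTop
      ≤ ((Pl' l : EReal) - (M'' : EReal)) + ((S l : ℝ≥0∞) : EReal) := by
    filter_upwards [hS_small] with l hSl
    have hSne : S l ≠ ⊤ := (hSl.trans ENNReal.one_lt_top).ne
    have hptw : ∀ n, erealIntegral (η n) v ≤ ((Pl l n : EReal) - (MM n : EReal)) + (S l : EReal) := by
      intro n
      have h1 : erealIntegral (η n) v = (PP n : EReal) - (MM n : EReal) := rfl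
      calc erealIntegral (η n) v ≤ ((Pl l n + S l : ℝ≥0∞) : EReal) - (MM n : EReal) := by
            rw [h1]
            exact EReal.sub_le_sub (EReal.coe_ennreal_le_coe_ennreal_iff.mpr (hPlS l n)) le_rfl
        _ ≤ _ := ereal_add_sub_le _ _ _ (hPl_ne l n) hSne
    calc limsup (fun n => erealIntegral (η n) v) atTop
        ≤ limsup (fun n => ((Pl l n : EReal) - (MM n : EReal)) + (S l : EReal)) atTop :=
          limsup_le_limsup (Eventually.of_forall hptw)
      _ ≤ limsup (fun n => (Pl l n : EReal) - (MM n : EReal)) atTop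
            + limsup (fun _ : ℕ => ((S l : ℝ≥0∞) : EReal)) atTop := by
          apply EReal.limsup_add_le
          · right; rw [limsup_const]; simp [EReal.coe_ennreal_eq_top_iff, hSne]
          · right; rw [limsup_const]; exact EReal.coe_ennreal_ne_bot _
      _ = limsup (fun n => (Pl l n : EReal) - (MM n : EReal)) atTop + (S l : EReal) := by
          rw [limsup_const]
      _ ≤ ((Pl' l : EReal) - (M'' : EReal)) + (S l : EReal) := add_le_add_left (hstep3 l) _
  -- conclusion
  have hgoal_eq : erealIntegral ηlim v = (P'' : EReal) - (M'' : EReal) := rfl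
  rw [hgoal_eq]
  refine le_trans (le_liminf_of_le (by isBoundedDefault) hfinal) ?_
  have hub : ∀ l : ℕ, ((Pl' l : EReal) - (M'' : EReal)) + ((S l : ℝ≥0∞) : EReal)
      ≤ ((P'' : EReal) - (M'' : EReal)) + ((S l : ℝ≥0∞) : EReal) := by
    intro l
    apply add_le_add_left
    exact EReal.sub_le_sub (EReal.coe_ennreal_le_coe_ennreal_iff.mpr
      (lintegral_mono fun y => min_le_left _ _)) le_rfl
  have htendS : Tendsto (fun l => ((P'' : EReal) - (M'' : EReal)) + ((S l : ℝ≥0∞) : EReal)) atTop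
      (𝓝 (((P'' : EReal) - (M'' : EReal)) + (0 : EReal))) := by
    have h1 : Tendsto (fun l => ((S l : ℝ≥0∞) : EReal)) atTop (𝓝 ((0 : ℝ≥0∞) : EReal)) :=
      (continuous_coe_ennreal_ereal.tendsto _).comp hui
    have hcont : ContinuousAt (fun q : EReal × EReal => q.1 + q.2)
        (((P'' : EReal) - (M'' : EReal)), (0 : EReal)) := by
      apply EReal.continuousAt_add
      · right; simp
      · right; simp
    have := hcont.tendsto.comp (tendsto_const_nhds.prodMk_nhds h1)
    simpa [Function.comp_def] using this
  calc liminf (fun l => ((Pl' l : EReal) - (M'' : EReal)) + ((S l : ℝ≥0∞) : EReal)) atTop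
      ≤ liminf (fun l => ((P'' : EReal) - (M'' : EReal)) + ((S l : ℝ≥0∞) : EReal)) atTop :=
        liminf_le_liminf (Eventually.of_forall hub)
    _ = ((P'' : EReal) - (M'' : EReal)) + (0 : EReal) := htendS.liminf_eq
    _ = (P'' : EReal) - (M'' : EReal) := add_zero _
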